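/- Fix n ≥ 1 and let φ^{(n)}(x) = (φ_1(x),…,φ_n(x)) with φ_1(x) = x_1, φ_k(x) = x_k ∏_{l<k}(1-x_l). For y in the image of (0,1)^n under φ^{(n)}, define a_{ij}(y) = y_i y_j ∑_{k=1}^{min(i,j)} (δ_{ki}(1−∑_{l<k} y_l) − y_k)(δ_{kj}(1−∑_{l<k} y_l) − y_k)/(y_k(1−∑_{l≤k} y_l)) for 1 ≤ i,j ≤ n. Then for all continuously differentiable F, G : ℝⁿ → ℝ and all x ∈ (0,1)^n, ∑_{i=1}^n x_i(1-x_i) · ∂_i(F∘φ^{(n)})(x) · ∂_i(G∘φ^{(n)})(x) = ∑_{i,j=1}^n a_{ij}(φ^{(n)}(x)) · (∂_i F)(φ^{(n)}(x)) · (∂_j G)(φ^{(n)}(x)). -/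

import Mathlib

open Finset

/-- Partial derivative in the `i`-th coordinate. -/
noncomputable def pd {n : ℕ} (i : Fin n) (F : (Fin n → ℝ) → ℝ) (x : Fin n → ℝ) : ℝ :=
  deriv (fun t => F (Function.update x i t)) (x i)

/-- The finite stick-breaking map `φ^{(n)}`: `φ_k(x) = x_k ∏_{l<k} (1 - x_l)`. -/
noncomputable def sbFin {n : ℕ} (x : Fin n → ℝ) : Fin n → ℝ :=
  fun k => x k * ∏ l ∈ Finset.Iio k, (1 - x l)

/-- The diffusion matrix of the GEM process (with `Finset.Iic (min i j)` playing the
role of `∑_{k=1}^{min(i,j)}`, and `δ` the Kronecker delta):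
`a_{ij}(y) = y_i y_j ∑_{k≤min(i,j)}
 (δ_{ki}(1−∑_{l<k}y_l) − y_k)(δ_{kj}(1−∑_{l<k}y_l) − y_k)/(y_k(1−∑_{l≤k}y_l))`. -/
noncomputable def gemAFin {n : ℕ} (y : Fin n → ℝ) (i j : Fin n) : ℝ :=
  y i * y j * ∑ k ∈ Finset.Iic (min i j),
    (((if k = i then (1:ℝ) else 0) * (1 - ∑ l ∈ Finset.Iio k, y l) - y k) *
      ((if k = j then (1:ℝ) else 0) * (1 - ∑ l ∈ Finset.Iio k, y l) - y k)) /
    (y k * (1 - ∑ l ∈ Finset.Iic k, y l))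

set_option maxHeartbeats 1000000
set_option synthInstance.maxHeartbeats 400000
set_option maxRecDepth 4000

/-- `∏_{l<k}(1-x_l)`. -/
noncomputable def Pprod {n : ℕ} (x : Fin n → ℝ) (k : Fin n) : ℝ :=
  ∏ l ∈ Finset.Iio k, (1 - x l)

/-- Jacobian `∂_k φ_i` of the stick-breaking map. -/
noncomputable def Dmat {n : ℕ} (x : Fin n → ℝ) (k i : Fin n) : ℝ :=
  if k = i then Pprod x i
  else if k < i then -(x i * ∏ l ∈ Finset.Iio i \ {k}, (1 - x l))
  else 0

lemma sbFin_update {n : ℕ} (x : Fin n → ℝ) (m : Fin n) (t : ℝ) :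
    sbFin (Function.update x m t) = fun i => sbFin x i + (t - x m) * Dmat x m i := by
  funext i
  rcases lt_trichotomy m i with hmi | hmi | hmi
  · have hmem : m ∈ Finset.Iio i := Finset.mem_Iio.mpr hmi
    have hprod : ∏ l ∈ Finset.Iio i, (1 - Function.update x m t l)
        = (1 - t) * ∏ l ∈ Finset.Iio i \ {m}, (1 - x l) := by
      rw [Finset.prod_eq_mul_prod_sdiff_singleton_of_mem hmem, Function.update_self]
      congr 1
      refine Finset.prod_congr rfl fun l hl => ?_
      rw [Function.update_of_ne (Finset.notMem_singleton.mp (Finset.mem_sdiff.mp hl).2)]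
    have hprod2 : ∏ l ∈ Finset.Iio i, (1 - x l)
        = (1 - x m) * ∏ l ∈ Finset.Iio i \ {m}, (1 - x l) :=
      Finset.prod_eq_mul_prod_sdiff_singleton_of_mem hmem _
    simp only [sbFin, Dmat, if_neg (ne_of_lt hmi), if_pos hmi,
      Function.update_of_ne (ne_of_gt hmi), hprod, hprod2]
    ring
  · subst hmi
    have hprod : ∏ l ∈ Finset.Iio m, (1 - Function.update x m t l)
        = ∏ l ∈ Finset.Iio m, (1 - x l) := by
      refine Finset.prod_congr rfl fun l hl => ?_
      rw [Function.update_of_ne (ne_of_lt (Finset.mem_Iio.mp hl))]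
    simp only [sbFin, Function.update_self, hprod]
    rw [show Dmat x m m = Pprod x m from if_pos rfl]
    simp only [Pprod]
    ring
  · have hD : Dmat x m i = 0 := by
      simp only [Dmat, if_neg (ne_of_gt hmi), if_neg (not_lt.mpr (le_of_lt hmi))]
    have hprod : ∏ l ∈ Finset.Iio i, (1 - Function.update x m t l)
        = ∏ l ∈ Finset.Iio i, (1 - x l) := by
      refine Finset.prod_congr rfl fun l hl => ?_
      rw [Function.update_of_ne (ne_of_lt (lt_trans (Finset.mem_Iio.mp hl) hmi))]
    simp only [sbFin, Function.update_of_ne (ne_of_lt hmi), hprod]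
    rw [hD]
    ring

lemma deriv_affine {n : ℕ} (F : (Fin n → ℝ) → ℝ) {y : Fin n → ℝ}
    (hF : DifferentiableAt ℝ F y) (v : Fin n → ℝ) (c : ℝ) :
    deriv (fun t => F (y + (t - c) • v)) c = fderiv ℝ F y v := by
  have hg : HasDerivAt (fun t : ℝ => y + (t - c) • v) v c := by
    have h1 : HasDerivAt (fun t : ℝ => t - c) 1 c := (hasDerivAt_id c).sub_const c
    have h2 := h1.smul_const v
    simpa using h2.const_add y
  have hFy : HasFDerivAt F (fderiv ℝ F y) ((fun t : ℝ => y + (t - c) • v) c) := by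
    simpa using hF.hasFDerivAt
  have := hFy.comp_hasDerivAt c hg
  exact this.deriv

lemma pd_eq_fderiv {n : ℕ} {F : (Fin n → ℝ) → ℝ} {y : Fin n → ℝ}
    (hF : DifferentiableAt ℝ F y) (i : Fin n) :
    pd i F y = fderiv ℝ F y (Pi.single i 1) := by
  have h : ∀ t, Function.update y i t = y + (t - y i) • (Pi.single i 1 : Fin n → ℝ) := by
    intro t; funext j
    rcases eq_or_ne j i with h | h
    · subst h; simp
    · simp [Function.update_of_ne h, Pi.single_apply, h]
  unfold pd
  simp_rw [h]
  exact deriv_affine F hF _ _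

lemma fderiv_apply_eq_sum {n : ℕ} {F : (Fin n → ℝ) → ℝ} {y : Fin n → ℝ}
    (hF : DifferentiableAt ℝ F y) (v : Fin n → ℝ) :
    fderiv ℝ F y v = ∑ i, v i * pd i F y := by
  have hv : v = ∑ i, v i • (Pi.single i 1 : Fin n → ℝ) := by
    rw [← Finset.univ_sum_single v]
    refine Finset.sum_congr rfl fun i _ => ?_
    funext j
    rcases eq_or_ne j i with h | h
    · subst h; simp
    · simp [Pi.single_apply, h]
  conv_lhs => rw [hv]
  rw [map_sum]
  refine Finset.sum_congr rfl fun i _ => ?_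
  rw [map_smul, pd_eq_fderiv hF i]
  simp

lemma pd_comp_sbFin {n : ℕ} {F : (Fin n → ℝ) → ℝ} (x : Fin n → ℝ)
    (hF : DifferentiableAt ℝ F (sbFin x)) (m : Fin n) :
    pd m (fun z => F (sbFin z)) x = ∑ i, Dmat x m i * pd i F (sbFin x) := by
  unfold pd
  have h : ∀ t : ℝ, sbFin (Function.update x m t)
      = sbFin x + (t - x m) • (fun i => Dmat x m i) := by
    intro t
    rw [sbFin_update]
    funext i
    simp [smul_eq_mul]
  simp_rw [h]
  rw [deriv_affine F hF _ _]
  exact fderiv_apply_eq_sum hF _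

lemma sum_sbFin_Iio {n : ℕ} (x : Fin n → ℝ) (k : Fin n) :
    ∑ l ∈ Finset.Iio k, sbFin x l = 1 - Pprod x k := by
  have key : ∀ m : ℕ, m ≤ n →
      ∑ l ∈ Finset.univ.filter (fun l : Fin n => l.val < m), sbFin x l
        = 1 - ∏ l ∈ Finset.univ.filter (fun l : Fin n => l.val < m), (1 - x l) := by
    intro m
    induction m with
    | zero => intro _; simp
    | succ m ih =>
      intro hm
      have hmn : m < n := lt_of_lt_of_le (Nat.lt_succ_self m) hm
      set km : Fin n := ⟨m, hmn⟩ with hkm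
      have hset : Finset.univ.filter (fun l : Fin n => l.val < m + 1)
          = insert km (Finset.univ.filter (fun l : Fin n => l.val < m)) := by
        ext l
        simp only [Finset.mem_filter, Finset.mem_univ, true_and, Finset.mem_insert]
        constructor
        · intro hl
          rcases Nat.lt_succ_iff_lt_or_eq.mp hl with h | h
          · exact Or.inr h
          · exact Or.inl (Fin.ext h)
        · rintro (rfl | h)
          · exact Nat.lt_succ_self m
          · exact Nat.lt_succ_of_lt h
      have hnot : km ∉ Finset.univ.filter (fun l : Fin n => l.val < m) := by
        intro hc
        rw [Finset.mem_filter] at hc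
        exact lt_irrefl m hc.2
      have hIio : Finset.Iio km = Finset.univ.filter (fun l : Fin n => l.val < m) := by
        ext l; simp only [Finset.mem_Iio, Finset.mem_filter, Finset.mem_univ, true_and, Fin.lt_def]; exact Iff.rfl
      rw [hset, Finset.sum_insert hnot, Finset.prod_insert hnot, ih (le_of_lt hmn)]
      have : sbFin x km = x km * ∏ l ∈ Finset.univ.filter (fun l : Fin n => l.val < m), (1 - x l) := by
        rw [show sbFin x km = x km * ∏ l ∈ Finset.Iio km, (1 - x l) from rfl, hIio]
      rw [this]
      ring
  have hIio : Finset.Iio k = Finset.univ.filter (fun l : Fin n => l.val < k.val) := by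
    ext l; simp only [Finset.mem_Iio, Finset.mem_filter, Finset.mem_univ, true_and, Fin.lt_def]
  rw [show Pprod x k = ∏ l ∈ Finset.Iio k, (1 - x l) from rfl, hIio]
  exact key k.val (le_of_lt k.isLt)

lemma sum_sbFin_Iic {n : ℕ} (x : Fin n → ℝ) (k : Fin n) :
    ∑ l ∈ Finset.Iic k, sbFin x l = 1 - Pprod x k * (1 - x k) := by
  rw [← Finset.Iio_insert, Finset.sum_insert (by simp),
    sum_sbFin_Iio]
  rw [show sbFin x k = x k * Pprod x k from rfl]
  ring

lemma star_lemma {n : ℕ} (x : Fin n → ℝ) {k i : Fin n} (h : k ≤ i) :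
    Dmat x k i * (sbFin x k * (1 - x k))
      = sbFin x i * ((if k = i then (1:ℝ) else 0) * Pprod x k - sbFin x k) := by
  rcases eq_or_lt_of_le h with rfl | hlt
  · simp only [Dmat, if_pos rfl, sbFin, Pprod, eq_self_iff_true, if_true]
    ring
  · have hmem : k ∈ Finset.Iio i := Finset.mem_Iio.mpr hlt
    have hprod : ∏ l ∈ Finset.Iio i, (1 - x l)
        = (1 - x k) * ∏ l ∈ Finset.Iio i \ {k}, (1 - x l) :=
      Finset.prod_eq_mul_prod_sdiff_singleton_of_mem hmem _
    simp only [Dmat, if_neg (ne_of_lt hlt), if_pos hlt, if_neg (ne_of_lt hlt), sbFin, Pprod,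
      hprod]
    ring

lemma key_lemma {n : ℕ} (x : Fin n → ℝ) (hx : ∀ k, x k ∈ Set.Ioo (0:ℝ) 1) (i j : Fin n) :
    ∑ m, x m * (1 - x m) * Dmat x m i * Dmat x m j = gemAFin (sbFin x) i j := by
  have hx1 : ∀ k, (0:ℝ) < 1 - x k := fun k => by have := (hx k).2; linarith
  have hP : ∀ k, 0 < Pprod x k := fun k =>
    Finset.prod_pos fun l _ => hx1 l
  have hy : ∀ k, 0 < sbFin x k := fun k => mul_pos (hx k).1 (hP k)
  -- restrict the sum
  rw [← Finset.sum_subset (Finset.subset_univ (Finset.Iic (min i j)))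
    (fun m _ hm => ?_)]
  · rw [gemAFin, Finset.mul_sum]
    refine Finset.sum_congr rfl fun k hk => ?_
    have hk' := Finset.mem_Iic.mp hk
    have hki : k ≤ i := le_trans hk' (min_le_left i j)
    have hkj : k ≤ j := le_trans hk' (min_le_right i j)
    have h1 := star_lemma x hki
    have h2 := star_lemma x hkj
    rw [sum_sbFin_Iio, sum_sbFin_Iic]
    have hsimp : (1:ℝ) - (1 - Pprod x k) = Pprod x k := by ring
    rw [hsimp, show (1:ℝ) - (1 - Pprod x k * (1 - x k)) = Pprod x k * (1 - x k) by ring]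
    have hden : sbFin x k * (Pprod x k * (1 - x k)) ≠ 0 :=
      ne_of_gt (mul_pos (hy k) (mul_pos (hP k) (hx1 k)))
    rw [show sbFin x i * sbFin x j *
        (((if k = i then (1:ℝ) else 0) * Pprod x k - sbFin x k) *
          ((if k = j then (1:ℝ) else 0) * Pprod x k - sbFin x k) /
          (sbFin x k * (Pprod x k * (1 - x k))))
        = sbFin x i * sbFin x j *
          (((if k = i then (1:ℝ) else 0) * Pprod x k - sbFin x k) *
            ((if k = j then (1:ℝ) else 0) * Pprod x k - sbFin x k)) /
          (sbFin x k * (Pprod x k * (1 - x k))) from by ring,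
      eq_div_iff hden]
    have hyk : sbFin x k = x k * Pprod x k := rfl
    have h12 : (Dmat x k i * (sbFin x k * (1 - x k))) *
        (Dmat x k j * (sbFin x k * (1 - x k)))
        = (sbFin x i * ((if k = i then (1:ℝ) else 0) * Pprod x k - sbFin x k)) *
          (sbFin x j * ((if k = j then (1:ℝ) else 0) * Pprod x k - sbFin x k)) := by
      rw [h1, h2]
    linear_combination h12 -
      Dmat x k i * Dmat x k j * (1 - x k) ^ 2 * sbFin x k * hyk
  · -- vanishing outside Iic (min i j)
    have hlt : min i j < m := not_le.mp (fun h => hm (Finset.mem_Iic.mpr h))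
    rcases min_lt_iff.mp hlt with h1 | h1
    · have : Dmat x m i = 0 := by
        simp only [Dmat, if_neg (ne_of_gt h1), if_neg (not_lt.mpr (le_of_lt h1))]
      rw [this]; ring
    · have : Dmat x m j = 0 := by
        simp only [Dmat, if_neg (ne_of_gt h1), if_neg (not_lt.mpr (le_of_lt h1))]
      rw [this]; ring

/-- **Carré du champ identity for the stick-breaking map.** For `C¹` functions
`F, G : ℝⁿ → ℝ` and `x ∈ (0,1)^n`,
`∑_i x_i(1-x_i) ∂_i(F∘φ^{(n)})(x) ∂_i(G∘φ^{(n)})(x)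
  = ∑_{i,j} a_{ij}(φ^{(n)}(x)) ∂_iF(φ^{(n)}(x)) ∂_jG(φ^{(n)}(x))`. -/
theorem stickBreak_carre_du_champ (n : ℕ) (hn : 1 ≤ n)
    (F G : (Fin n → ℝ) → ℝ) (hF : ContDiff ℝ 1 F) (hG : ContDiff ℝ 1 G)
    (x : Fin n → ℝ) (hx : ∀ k, x k ∈ Set.Ioo (0:ℝ) 1) :
    ∑ i, x i * (1 - x i) * pd i (fun z => F (sbFin z)) x * pd i (fun z => G (sbFin z)) x
      = ∑ i, ∑ j, gemAFin (sbFin x) i j * pd i F (sbFin x) * pd j G (sbFin x) := by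
  have hFd : DifferentiableAt ℝ F (sbFin x) := (hF.differentiable one_ne_zero) (sbFin x)
  have hGd : DifferentiableAt ℝ G (sbFin x) := (hG.differentiable one_ne_zero) (sbFin x)
  calc ∑ m, x m * (1 - x m) * pd m (fun z => F (sbFin z)) x * pd m (fun z => G (sbFin z)) x
      = ∑ m, ∑ i, ∑ j, (x m * (1 - x m) * Dmat x m i * Dmat x m j)
          * (pd i F (sbFin x) * pd j G (sbFin x)) := by
        refine Finset.sum_congr rfl fun m _ => ?_
        rw [pd_comp_sbFin x hFd m, pd_comp_sbFin x hGd m]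
        rw [mul_assoc, Finset.sum_mul_sum, Finset.mul_sum]
        refine Finset.sum_congr rfl fun i _ => ?_
        rw [Finset.mul_sum]
        refine Finset.sum_congr rfl fun j _ => ?_
        ring
    _ = ∑ i, ∑ j, (∑ m, x m * (1 - x m) * Dmat x m i * Dmat x m j)
          * (pd i F (sbFin x) * pd j G (sbFin x)) := by
        rw [Finset.sum_comm]
        refine Finset.sum_congr rfl fun i _ => ?_
        rw [Finset.sum_comm]
        refine Finset.sum_congr rfl fun j _ => ?_
        rw [Finset.sum_mul]
    _ = ∑ i, ∑ j, gemAFin (sbFin x) i j * pd i F (sbFin x) * pd j G (sbFin x) := by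
        refine Finset.sum_congr rfl fun i _ => Finset.sum_congr rfl fun j _ => ?_
        rw [key_lemma x hx i j, mul_assoc]
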